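/- Let h : ℂ × ℝ × ℝ → ℂ, written h(z;x,t), and let z₀ ∈ ℂ, (x_b,t_b) ∈ ℝ². Assume: (i) for every (x,t) in a neighborhood of (x_b,t_b), the map z ↦ h(z;x,t) is holomorphic on a fixed neighborhood of z₀, with complex z-derivatives h' and h''; (ii) the map (u,v,x,t) ↦ (h(u+iv;x,t), h'(u+iv;x,t)) is continuously differentiable as a map from an open subset of ℝ⁴ into ℂ² ≅ ℝ⁴ near (Re z₀, Im z₀, x_b, t_b); (iii) h'(z₀;x_b,t_b) = 0; (iv) Im h(z₀;x_b,t_b) = 0; (v) h''(z₀;x_b,t_b) ≠ 0; (vi) Im h_t(z₀;x_b,t_b) ≠ 0, where h_t denotes the partial derivative of h in t. Then there exist ε > 0 and continuously differentiable functions ζ : (x_b−ε, x_b+ε) → ℂ and τ : (x_b−ε, x_b+ε) → ℝ with ζ(x_b) = z₀ and τ(x_b) = t_b, such that h'(ζ(x); x, τ(x)) = 0 and Im h(ζ(x); x, τ(x)) = 0 for all x with |x − x_b| < ε; moreover there is a neighborhood U of (z₀, x_b, t_b) in ℂ × ℝ × ℝ such that every (z,x,t) ∈ U with h'(z;x,t)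 = 0 and Im h(z;x,t) = 0 satisfies z = ζ(x) and t = τ(x). -/

import Mathlib

open Complex

private lemma hasDerivAt_c_im {f : ℝ → ℂ} {c : ℂ} {x : ℝ} (hf : HasDerivAt f c x) :
    HasDerivAt (fun y => (f y).im) c.im x := by
  exact Complex.imCLM.hasFDerivAt.comp_hasDerivAt x hf

private lemma hasDerivAt_c_re {f : ℝ → ℂ} {c : ℂ} {x : ℝ} (hf : HasDerivAt f c x) :
    HasDerivAt (fun y => (f y).re) c.re x := by
  exact Complex.reCLM.hasFDerivAt.comp_hasDerivAt x hf

/-- Theorem 4.2 and Corollary 4.3 of the paper: through a regular nondegenerate breaking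
point `(x_b, t_b)` with corresponding double point `z₀` in the spectral plane, there pass
unique continuously differentiable curves `x ↦ ζ(x)` (the motion of the double point) and
`x ↦ τ(x)` (the breaking curve `t = τ(x)`), solving the system `h'(z;x,t) = 0`,
`Im h(z;x,t) = 0`, and these are locally the only solutions. -/
theorem breaking_curve_exists_unique
    (h h' h'' : ℂ → ℝ → ℝ → ℂ) (z₀ : ℂ) (x_b t_b : ℝ)
    -- (i) holomorphy in z near z₀, locally uniformly in (x,t) near (x_b,t_b)
    (V : Set (ℝ × ℝ)) (hV : V ∈ nhds (x_b, t_b)) (U : Set ℂ) (hU : U ∈ nhds z₀)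
    (hder : ∀ p ∈ V, ∀ z ∈ U,
      HasDerivAt (fun w => h w p.1 p.2) (h' z p.1 p.2) z ∧
      HasDerivAt (fun w => h' w p.1 p.2) (h'' z p.1 p.2) z)
    -- (ii) C¹ regularity in all four real variables of (h, h')
    (hC1 : ContDiffAt ℝ 1
      (fun q : ℝ × ℝ × ℝ × ℝ =>
        (h (q.1 + q.2.1 * I) q.2.2.1 q.2.2.2, h' (q.1 + q.2.1 * I) q.2.2.1 q.2.2.2))
      (z₀.re, z₀.im, x_b, t_b))
    -- (iii) h'(z₀; x_b, t_b) = 0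
    (hcrit : h' z₀ x_b t_b = 0)
    -- (iv) Im h(z₀; x_b, t_b) = 0
    (him : (h z₀ x_b t_b).im = 0)
    -- (v) nondegeneracy: h''(z₀; x_b, t_b) ≠ 0
    (hnd : h'' z₀ x_b t_b ≠ 0)
    -- (vi) Im h_t(z₀; x_b, t_b) ≠ 0
    (ht : ℂ) (hdt : HasDerivAt (fun t => h z₀ x_b t) ht t_b) (hht : ht.im ≠ 0) :
    ∃ ε > (0:ℝ), ∃ ζ : ℝ → ℂ, ∃ τ : ℝ → ℝ,
      ContDiffOn ℝ 1 ζ (Set.Ioo (x_b - ε) (x_b + ε)) ∧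
      ContDiffOn ℝ 1 τ (Set.Ioo (x_b - ε) (x_b + ε)) ∧
      ζ x_b = z₀ ∧ τ x_b = t_b ∧
      (∀ x ∈ Set.Ioo (x_b - ε) (x_b + ε),
        h' (ζ x) x (τ x) = 0 ∧ (h (ζ x) x (τ x)).im = 0) ∧
      ∃ W ∈ nhds ((z₀, x_b, t_b) : ℂ × ℝ × ℝ),
        ∀ p ∈ W, h' p.1 p.2.1 p.2.2 = 0 → (h p.1 p.2.1 p.2.2).im = 0 →
          p.1 = ζ p.2.1 ∧ p.2.2 = τ p.2.1 := by
  classical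
  set p₀ : ℝ × ℝ × ℝ × ℝ := (z₀.re, z₀.im, x_b, t_b) with hp₀
  set Φ : (ℝ × ℝ × ℝ × ℝ) → (ℝ × ℝ × ℝ × ℝ) := fun q =>
    (q.2.2.1, (h' (q.1 + q.2.1 * I) q.2.2.1 q.2.2.2).re,
      (h' (q.1 + q.2.1 * I) q.2.2.1 q.2.2.2).im,
      (h (q.1 + q.2.1 * I) q.2.2.1 q.2.2.2).im) with hΦdef
  -- C¹ regularity of Φ
  have hF1 : ContDiffAt ℝ 1 (fun q : ℝ × ℝ × ℝ × ℝ =>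
      h (q.1 + q.2.1 * I) q.2.2.1 q.2.2.2) p₀ := ContDiffAt.fst hC1
  have hF2 : ContDiffAt ℝ 1 (fun q : ℝ × ℝ × ℝ × ℝ =>
      h' (q.1 + q.2.1 * I) q.2.2.1 q.2.2.2) p₀ := ContDiffAt.snd hC1
  have hΦC1 : ContDiffAt ℝ 1 Φ p₀ := by
    refine ContDiffAt.prodMk ?_ (ContDiffAt.prodMk ?_ (ContDiffAt.prodMk ?_ ?_))
    · exact ((contDiff_fst.comp (contDiff_snd.comp contDiff_snd)).contDiffAt)
    · exact ContDiffAt.comp p₀ Complex.reCLM.contDiff.contDiffAt hF2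
    · exact ContDiffAt.comp p₀ Complex.imCLM.contDiff.contDiffAt hF2
    · exact ContDiffAt.comp p₀ Complex.imCLM.contDiff.contDiffAt hF1
  have hΦd : DifferentiableAt ℝ Φ p₀ := hΦC1.differentiableAt one_ne_zero
  set L := fderiv ℝ Φ p₀ with hLdef
  have hL : HasFDerivAt Φ L p₀ := hΦd.hasFDerivAt
  -- basic memberships and complex derivatives at the base point
  have hVmem : (x_b, t_b) ∈ V := mem_of_mem_nhds hV
  have hUmem : z₀ ∈ U := mem_of_mem_nhds hU
  obtain ⟨hd1, hd2⟩ := hder (x_b, t_b) hVmem z₀ hUmem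
  -- derivatives along the u and v directions, from holomorphy
  have hlineU : ∀ (g : ℂ → ℂ) (c : ℂ), HasDerivAt g c z₀ →
      HasDerivAt (fun u : ℝ => g (↑u + ↑z₀.im * I)) c z₀.re := by
    intro g c hg
    have hinner : HasDerivAt (fun w : ℂ => w + (↑z₀.im * I)) 1 ↑z₀.re := by
      simpa using (hasDerivAt_id (↑z₀.re : ℂ)).add_const (↑z₀.im * I)
    have houter : HasDerivAt g c ((fun w : ℂ => w + (↑z₀.im * I)) ↑z₀.re) := by
      show HasDerivAt g c (↑z₀.re + ↑z₀.im * I)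
      rw [Complex.re_add_im]; exact hg
    have h2 := HasDerivAt.comp (↑z₀.re : ℂ) houter hinner
    simpa [Function.comp] using h2.comp_ofReal
  have hlineV : ∀ (g : ℂ → ℂ) (c : ℂ), HasDerivAt g c z₀ →
      HasDerivAt (fun v : ℝ => g (↑z₀.re + ↑v * I)) (c * I) z₀.im := by
    intro g c hg
    have hinner : HasDerivAt (fun w : ℂ => ↑z₀.re + w * I) I ↑z₀.im := by
      simpa using ((hasDerivAt_id (↑z₀.im : ℂ)).mul_const I).const_add (↑z₀.re : ℂ)
    have houter : HasDerivAt g c ((fun w : ℂ => ↑z₀.re + w * I) ↑z₀.im) := by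
      show HasDerivAt g c (↑z₀.re + ↑z₀.im * I)
      rw [Complex.re_add_im]; exact hg
    have h2 := HasDerivAt.comp (↑z₀.im : ℂ) houter hinner
    simpa [Function.comp] using h2.comp_ofReal
  -- a tool to compute L along lines
  have hb : ∀ (w : ℝ × ℝ × ℝ × ℝ) (ℓ : ℝ → ℝ × ℝ × ℝ × ℝ) (s : ℝ) (c : ℝ × ℝ × ℝ × ℝ),
      ℓ s = p₀ → HasDerivAt ℓ w s → HasDerivAt (fun r => Φ (ℓ r)) c s → L w = c := by
    intro w ℓ s c hs hℓ hc
    have hL' : HasFDerivAt Φ L (ℓ s) := by rw [hs]; exact hL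
    exact (hL'.comp_hasDerivAt s hℓ).unique hc
  set a : ℝ := (h'' z₀ x_b t_b).re with ha
  set b : ℝ := (h'' z₀ x_b t_b).im with hbdef
  have hLu : L (1, 0, 0, 0) = (0, a, b, 0) := by
    refine hb _ (fun u => (u, z₀.im, x_b, t_b)) z₀.re _ rfl ?_ ?_
    · exact (hasDerivAt_id _).prodMk ((hasDerivAt_const _ _).prodMk
        ((hasDerivAt_const _ _).prodMk (hasDerivAt_const _ _)))
    · have k2 := hlineU (fun w => h' w x_b t_b) _ hd2
      have k1 := hlineU (fun w => h w x_b t_b) _ hd1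
      exact (hasDerivAt_const _ _).prodMk ((hasDerivAt_c_re k2).prodMk
        ((hasDerivAt_c_im k2).prodMk (by simpa [hcrit] using hasDerivAt_c_im k1)))
  have hLv : L (0, 1, 0, 0) = (0, -b, a, 0) := by
    refine hb _ (fun v => (z₀.re, v, x_b, t_b)) z₀.im _ rfl ?_ ?_
    · exact (hasDerivAt_const _ _).prodMk ((hasDerivAt_id _).prodMk
        ((hasDerivAt_const _ _).prodMk (hasDerivAt_const _ _)))
    · have k2 := hlineV (fun w => h' w x_b t_b) _ hd2
      have k1 := hlineV (fun w => h w x_b t_b) _ hd1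
      refine (hasDerivAt_const _ _).prodMk (HasDerivAt.prodMk ?_ (HasDerivAt.prodMk ?_ ?_))
      · simpa [ha, Complex.mul_I_re] using hasDerivAt_c_re k2
      · simpa [hbdef, Complex.mul_I_im] using hasDerivAt_c_im k2
      · simpa [hcrit] using hasDerivAt_c_im k1
  -- the t-direction: first and last components of L e_t
  have hLt : ∃ A B : ℝ, L (0, 0, 0, 1) = (0, A, B, ht.im) := by
    have hℓ : HasDerivAt (fun t : ℝ => ((z₀.re, z₀.im, x_b, t) : ℝ × ℝ × ℝ × ℝ))
        ((0, 0, 0, 1) : ℝ × ℝ × ℝ × ℝ) t_b :=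
      (hasDerivAt_const _ _).prodMk ((hasDerivAt_const _ _).prodMk
        ((hasDerivAt_const _ _).prodMk (hasDerivAt_id _)))
    have hcomp : HasDerivAt (fun t : ℝ => Φ (z₀.re, z₀.im, x_b, t)) (L (0, 0, 0, 1)) t_b := by
      have hL' : HasFDerivAt Φ L ((fun t : ℝ => ((z₀.re, z₀.im, x_b, t) : ℝ × ℝ × ℝ × ℝ)) t_b) :=
        hL
      exact hL'.comp_hasDerivAt t_b hℓ
    refine ⟨(L (0, 0, 0, 1)).2.1, (L (0, 0, 0, 1)).2.2.1, ?_⟩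
    have h1 : (L (0, 0, 0, 1)).1 = 0 := by
      have hproj := (ContinuousLinearMap.fst ℝ ℝ (ℝ × ℝ × ℝ)).hasFDerivAt.comp_hasDerivAt
        t_b hcomp
      exact hproj.unique (hasDerivAt_const _ _)
    have h4 : (L (0, 0, 0, 1)).2.2.2 = ht.im := by
      have hproj := (((ContinuousLinearMap.snd ℝ ℝ ℝ).comp
        ((ContinuousLinearMap.snd ℝ ℝ (ℝ × ℝ)).comp
          (ContinuousLinearMap.snd ℝ ℝ (ℝ × ℝ × ℝ)))).hasFDerivAt).comp_hasDerivAt t_b hcomp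
      have hother : HasDerivAt (fun t : ℝ => (h (↑z₀.re + ↑z₀.im * I) x_b t).im) ht.im t_b := by
        rw [Complex.re_add_im]; exact hasDerivAt_c_im hdt
      exact hproj.unique hother
    exact Prod.ext h1 (Prod.ext rfl (Prod.ext rfl h4))
  obtain ⟨A, B, hLt⟩ := hLt
  -- the first component of L is the projection q ↦ q.2.2.1
  have hD : ∀ w : ℝ × ℝ × ℝ × ℝ, (L w).1 = w.2.2.1 := by
    intro w
    set P : (ℝ × ℝ × ℝ × ℝ) →L[ℝ] ℝ :=
      (ContinuousLinearMap.fst ℝ ℝ ℝ).comp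
        ((ContinuousLinearMap.snd ℝ ℝ (ℝ × ℝ)).comp
          (ContinuousLinearMap.snd ℝ ℝ (ℝ × ℝ × ℝ))) with hP
    have h1 : HasFDerivAt (fun q : ℝ × ℝ × ℝ × ℝ => (Φ q).1)
        ((ContinuousLinearMap.fst ℝ ℝ (ℝ × ℝ × ℝ)).comp L) p₀ := hL.fst
    have h2 : HasFDerivAt (fun q : ℝ × ℝ × ℝ × ℝ => (Φ q).1) P p₀ := P.hasFDerivAt
    have := h1.unique h2
    calc (L w).1 = ((ContinuousLinearMap.fst ℝ ℝ (ℝ × ℝ × ℝ)).comp L) w := rfl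
      _ = P w := by rw [this]
      _ = w.2.2.1 := rfl
  -- injectivity of L
  have hab : a ^ 2 + b ^ 2 ≠ 0 := by
    intro hz
    apply hnd
    have h1 : a = 0 := by nlinarith [sq_nonneg a, sq_nonneg b]
    have h2 : b = 0 := by nlinarith [sq_nonneg a, sq_nonneg b]
    exact Complex.ext (by simpa [ha] using h1) (by simpa [hbdef] using h2)
  have hker : ∀ w : ℝ × ℝ × ℝ × ℝ, L w = 0 → w = 0 := by
    intro w hw
    have hx3 : w.2.2.1 = 0 := by
      have := hD w
      rw [hw] at this
      simpa using this.symm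
    have hw' : w = w.1 • ((1, 0, 0, 0) : ℝ × ℝ × ℝ × ℝ)
        + w.2.1 • ((0, 1, 0, 0) : ℝ × ℝ × ℝ × ℝ)
        + w.2.2.2 • ((0, 0, 0, 1) : ℝ × ℝ × ℝ × ℝ) := by
      refine Prod.ext ?_ (Prod.ext ?_ (Prod.ext ?_ ?_)) <;>
        simp [Prod.ext_iff, hx3]
    rw [hw'] at hw
    simp only [map_add, map_smul, hLu, hLv, hLt] at hw
    have c4 : w.1 * 0 + w.2.1 * 0 + w.2.2.2 * ht.im = 0 := by
      have := congrArg (fun p : ℝ × ℝ × ℝ × ℝ => p.2.2.2) hw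
      simpa [smul_eq_mul] using this
    have hw4 : w.2.2.2 = 0 := by
      have c4' : w.2.2.2 * ht.im = 0 := by linarith
      rcases mul_eq_zero.mp c4' with hc | hc
      · exact hc
      · exact absurd hc hht
    have c2 : w.1 * a + w.2.1 * (-b) + w.2.2.2 * A = 0 := by
      have := congrArg (fun p : ℝ × ℝ × ℝ × ℝ => p.2.1) hw
      simpa [smul_eq_mul] using this
    have c3 : w.1 * b + w.2.1 * a + w.2.2.2 * B = 0 := by
      have := congrArg (fun p : ℝ × ℝ × ℝ × ℝ => p.2.2.1) hw
      simpa [smul_eq_mul] using this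
    rw [hw4] at c2 c3
    have hw1 : w.1 = 0 := by
      have : w.1 * (a ^ 2 + b ^ 2) = 0 := by linear_combination a * c2 + b * c3
      rcases mul_eq_zero.mp this with h | h
      · exact h
      · exact absurd h hab
    have hw2 : w.2.1 = 0 := by
      have : w.2.1 * (a ^ 2 + b ^ 2) = 0 := by linear_combination a * c3 - b * c2
      rcases mul_eq_zero.mp this with h | h
      · exact h
      · exact absurd h hab
    refine Prod.ext ?_ (Prod.ext ?_ (Prod.ext ?_ ?_)) <;> simp [hw1, hw2, hx3, hw4]
  have hinj : Function.Injective L := by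
    intro w₁ w₂ hww
    have : L (w₁ - w₂) = 0 := by rw [map_sub, hww, sub_self]
    have := hker _ this
    exact sub_eq_zero.mp this
  have hsurj : Function.Surjective (L : (ℝ × ℝ × ℝ × ℝ) →ₗ[ℝ] (ℝ × ℝ × ℝ × ℝ)) :=
    LinearMap.injective_iff_surjective.mp hinj
  set eL : (ℝ × ℝ × ℝ × ℝ) ≃ₗ[ℝ] (ℝ × ℝ × ℝ × ℝ) :=
    LinearEquiv.ofBijective (L : (ℝ × ℝ × ℝ × ℝ) →ₗ[ℝ] (ℝ × ℝ × ℝ × ℝ)) ⟨hinj, hsurj⟩ with heL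
  set e : (ℝ × ℝ × ℝ × ℝ) ≃L[ℝ] (ℝ × ℝ × ℝ × ℝ) := eL.toContinuousLinearEquiv with he
  have hecoe : (e : (ℝ × ℝ × ℝ × ℝ) →L[ℝ] (ℝ × ℝ × ℝ × ℝ)) = L := by
    apply ContinuousLinearMap.coe_injective
    rfl
  have hL' : HasFDerivAt Φ (e : (ℝ × ℝ × ℝ × ℝ) →L[ℝ] (ℝ × ℝ × ℝ × ℝ)) p₀ := by
    rw [hecoe]; exact hL
  -- the local inverse
  set Ψ := hΦC1.localInverse hL' one_ne_zero with hΨdef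
  have hΨC1 : ContDiffAt ℝ 1 Ψ (Φ p₀) := hΦC1.to_localInverse hL' one_ne_zero
  have hstrict : HasStrictFDerivAt Φ (e : (ℝ × ℝ × ℝ × ℝ) →L[ℝ] (ℝ × ℝ × ℝ × ℝ)) p₀ :=
    hΦC1.hasStrictFDerivAt' hL' one_ne_zero
  have hleft : ∀ᶠ q in nhds p₀, Ψ (Φ q) = q := hstrict.eventually_left_inverse
  have hright : ∀ᶠ y in nhds (Φ p₀), Φ (Ψ y) = y := hstrict.eventually_right_inverse
  have hΨp₀ : Ψ (Φ p₀) = p₀ := hΦC1.localInverse_apply_image hL' one_ne_zero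
  have hΦp₀ : Φ p₀ = (x_b, 0, 0, 0) := by
    simp only [hΦdef, hp₀]
    simp [Complex.re_add_im, hcrit, him]
  -- choose the neighborhoods
  obtain ⟨s, hs_mem, hΨs⟩ := hΨC1.contDiffOn (m := 1) le_rfl (by simp)
  obtain ⟨s', hs'_mem, hs'⟩ := Filter.eventually_iff_exists_mem.mp hright
  obtain ⟨N, hN_mem, hNl⟩ := Filter.eventually_iff_exists_mem.mp hleft
  set ι : ℝ → ℝ × ℝ × ℝ × ℝ := fun x => (x, 0, 0, 0) with hι
  have hιx : ι x_b = Φ p₀ := by rw [hΦp₀]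
  have hιcont : Continuous ι := by fun_prop
  have hpre : ι ⁻¹' (s ∩ s') ∈ nhds x_b := by
    apply hιcont.continuousAt.preimage_mem_nhds
    rw [hιx]
    exact Filter.inter_mem hs_mem hs'_mem
  obtain ⟨ε, hε, hball⟩ := Metric.mem_nhds_iff.mp hpre
  rw [Real.ball_eq_Ioo] at hball
  have hΨι : ContDiffOn ℝ 1 (fun x => Ψ (ι x)) (Set.Ioo (x_b - ε) (x_b + ε)) := by
    refine hΨs.comp ?_ ?_
    · exact (contDiff_id.prodMk contDiff_const).contDiffOn
    · intro x hx
      exact (hball hx).1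
  refine ⟨ε, hε, fun x => ↑(Ψ (ι x)).1 + ↑(Ψ (ι x)).2.1 * I, fun x => (Ψ (ι x)).2.2.2,
    ?_, ?_, ?_, ?_, ?_, ?_⟩
  · -- ζ is C¹
    have houter : ContDiff ℝ 1 (fun q : ℝ × ℝ × ℝ × ℝ => (↑q.1 + ↑q.2.1 * I : ℂ)) := by
      apply ContDiff.add
      · exact Complex.ofRealCLM.contDiff.comp contDiff_fst
      · exact (Complex.ofRealCLM.contDiff.comp (contDiff_fst.comp contDiff_snd)).mul contDiff_const
    exact houter.comp_contDiffOn hΨι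
  · -- τ is C¹
    exact (contDiff_snd.comp (contDiff_snd.comp contDiff_snd)).comp_contDiffOn hΨι
  · -- ζ x_b = z₀
    have hq : Ψ (ι x_b) = p₀ := by rw [hιx]; exact hΨp₀
    show ↑(Ψ (ι x_b)).1 + ↑(Ψ (ι x_b)).2.1 * I = z₀
    rw [hq]
    exact Complex.re_add_im z₀
  · -- τ x_b = t_b
    have hq : Ψ (ι x_b) = p₀ := by rw [hιx]; exact hΨp₀
    show (Ψ (ι x_b)).2.2.2 = t_b
    rw [hq]
  · -- the equations hold along the curve
    intro x hx
    have hmem := hball hx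
    have hr := hs' (ι x) hmem.2
    simp only [hΦdef, hι, Prod.mk.injEq] at hr
    obtain ⟨e1, e2, e3, e4⟩ := hr
    constructor
    · have k : h' (↑(Ψ (x, 0, 0, 0)).1 + ↑(Ψ (x, 0, 0, 0)).2.1 * I)
          ((Ψ (x, 0, 0, 0)).2.2.1) ((Ψ (x, 0, 0, 0)).2.2.2) = 0 :=
        Complex.ext (by simpa using e2) (by simpa using e3)
      rw [e1] at k
      show h' (↑(Ψ (ι x)).1 + ↑(Ψ (ι x)).2.1 * I) x (Ψ (ι x)).2.2.2 = 0
      simpa [hι] using k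
    · have k : (h (↑(Ψ (x, 0, 0, 0)).1 + ↑(Ψ (x, 0, 0, 0)).2.1 * I)
          ((Ψ (x, 0, 0, 0)).2.2.1) ((Ψ (x, 0, 0, 0)).2.2.2)).im = 0 := e4
      rw [e1] at k
      show (h (↑(Ψ (ι x)).1 + ↑(Ψ (ι x)).2.1 * I) x (Ψ (ι x)).2.2.2).im = 0
      simpa [hι] using k
  · -- local uniqueness
    refine ⟨(fun p : ℂ × ℝ × ℝ => ((p.1.re, p.1.im, p.2.1, p.2.2) : ℝ × ℝ × ℝ × ℝ)) ⁻¹' N,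
      ?_, ?_⟩
    · apply ContinuousAt.preimage_mem_nhds
      · exact Continuous.continuousAt (by fun_prop)
      · exact hN_mem
    · intro p hp hc' hi'
      have hq := hNl _ hp
      have hΦρ : Φ (p.1.re, p.1.im, p.2.1, p.2.2) = ι p.2.1 := by
        simp only [hΦdef, hι]
        simp [Complex.re_add_im, hc', hi']
      rw [hΦρ] at hq
      constructor
      · show p.1 = ↑(Ψ (ι p.2.1)).1 + ↑(Ψ (ι p.2.1)).2.1 * I
        rw [hq]
        exact (Complex.re_add_im p.1).symm
      · show p.2.2 = (Ψ (ι p.2.1)).2.2.2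
        rw [hq]
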